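/- Let (X,d,μ) be a space of homogeneous type with μ(X) = ∞ in which balls have positive finite measure, p ∈ (0,1], q ∈ [1,∞], q > p, and let a be a local (p,q)-atom supported on a ball B = B(x₀,r₀) with r₀ ∈ (1,∞). Then for any x ∉ B(x₀, 2A₀r₀) and any test function φ with ‖φ‖_{G(x,r,β,γ)} ≤ 1 for some r ∈ (0,1], one has |∫_X a(y)φ(y)dμ(y)| ≤ C [r/d(x₀,x)]^γ μ(B)^{1-1/p} / V(x₀,x), with C independent of a, x, φ and r. -/

import Mathlib

open MeasureTheory ENNReal

/-- The quasi-metric ball `B(x,r) := {y : d(x,y) < r}`. -/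
def qball {X : Type*} (d : X → X → ℝ) (x : X) (r : ℝ) : Set X := {y | d x y < r}

lemma L1bound {X : Type*} [MeasurableSpace X] (μ : Measure X) (a : X → ℝ) (q : ℝ≥0∞)
    (hq : 1 ≤ q) (ha : MemLp a q μ) (B : Set X) (hsupp : Function.support a ⊆ B)
    (mB0 : μ B ≠ 0) (mBtop : μ B ≠ ⊤) (e : ℝ)
    (hnorm : eLpNorm a q μ ≤ μ B ^ (1 / q.toReal - e)) :
    ∫⁻ y, (‖a y‖₊ : ℝ≥0∞) ∂μ ≤ μ B ^ (1 - e) := by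
  have hmeasA := ha.1
  set a' := hmeasA.mk a with ha'def
  have ha'sm : StronglyMeasurable a' := hmeasA.stronglyMeasurable_mk
  have hae : a =ᵐ[μ] a' := hmeasA.ae_eq_mk
  have ha'meas : Measurable a' := ha'sm.measurable
  set S : Set X := {y | a' y ≠ 0} with hSdef
  have hSmeas : MeasurableSet S := ha'meas (measurableSet_singleton 0) |>.compl
  have hnull : μ {y | a y ≠ a' y} = 0 := by
    have := hae
    rw [Filter.EventuallyEq, ae_iff] at this
    exact this
  have hμS : μ S ≤ μ B := by
    have hSsub : S ⊆ Function.support a ∪ {y | a y ≠ a' y} := by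
      intro y hy
      by_cases h : a y = a' y
      · left; simp only [Function.mem_support]; rw [h]; exact hy
      · right; exact h
    calc μ S ≤ μ (Function.support a ∪ {y | a y ≠ a' y}) := measure_mono hSsub
      _ ≤ μ (Function.support a) + μ {y | a y ≠ a' y} := measure_union_le _ _
      _ = μ (Function.support a) := by rw [hnull, add_zero]
      _ ≤ μ B := measure_mono hsupp
  have hLeq : ∫⁻ y, (‖a y‖₊ : ℝ≥0∞) ∂μ = ∫⁻ y, (‖a' y‖₊ : ℝ≥0∞) ∂μ :=
    lintegral_congr_ae (hae.mono fun y hy => by dsimp only; rw [hy])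
  rw [hLeq]
  by_cases hqtop : q = ⊤
  · -- q = ∞
    have h1 : eLpNormEssSup a μ ≤ μ B ^ (0 - e) := by
      have := hnorm
      rw [hqtop] at this
      simpa [eLpNorm_exponent_top] using this
    have hind : (fun y => (‖a' y‖₊ : ℝ≥0∞)) = S.indicator (fun y => (‖a' y‖₊ : ℝ≥0∞)) := by
      funext y
      by_cases hy : y ∈ S
      · rw [Set.indicator_of_mem hy]
      · rw [Set.indicator_of_notMem hy]
        have : a' y = 0 := by simpa [hSdef] using hy
        simp [this]
    rw [hind, lintegral_indicator hSmeas _]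
    have hbdd : ∀ᵐ y ∂μ, (‖a' y‖₊ : ℝ≥0∞) ≤ eLpNormEssSup a μ := by
      have h2 : ∀ᵐ y ∂μ, (‖a y‖₊ : ℝ≥0∞) ≤ eLpNormEssSup a μ := ae_le_eLpNormEssSup
      filter_upwards [h2, hae] with y hy he
      rw [← he]; exact hy
    calc ∫⁻ y in S, (‖a' y‖₊ : ℝ≥0∞) ∂μ
        ≤ ∫⁻ _ in S, eLpNormEssSup a μ ∂μ :=
          lintegral_mono_ae (ae_restrict_of_ae hbdd)
      _ = eLpNormEssSup a μ * μ S := by rw [setLIntegral_const]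
      _ ≤ μ B ^ (0 - e) * μ B := mul_le_mul' h1 hμS
      _ = μ B ^ (0 - e) * μ B ^ (1:ℝ) := by rw [ENNReal.rpow_one]
      _ = μ B ^ (1 - e) := by
          rw [← ENNReal.rpow_add _ _ mB0 mBtop]; congr 1; ring
  · by_cases hq1 : q = 1
    · simp_rw [← enorm_eq_nnnorm]
      rw [← eLpNorm_one_eq_lintegral_enorm,
        eLpNorm_congr_ae hae.symm]
      have := hnorm
      rw [hq1] at this
      simpa using this
    · -- 1 < q < ∞
      have hq1' : 1 < q := lt_of_le_of_ne hq (Ne.symm hq1)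
      have hqr : 1 < q.toReal := by
        rw [← ENNReal.toReal_one]
        exact (ENNReal.toReal_lt_toReal ENNReal.one_ne_top hqtop).mpr hq1'
      set qr := q.toReal with hqrdef
      have hconj : qr.HolderConjugate (qr / (qr - 1)) := Real.HolderConjugate.conjExponent hqr
      set qr' := qr / (qr - 1) with hqr'def
      have hf : AEMeasurable (fun y => (‖a' y‖₊ : ℝ≥0∞)) μ :=
        (ha'meas.nnnorm.coe_nnreal_ennreal).aemeasurable
      have hg : AEMeasurable (S.indicator (fun _ => (1 : ℝ≥0∞))) μ :=
        (measurable_const.indicator hSmeas).aemeasurable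
      have hH := ENNReal.lintegral_mul_le_Lp_mul_Lq μ hconj hf hg
      have hfg : (fun y => (‖a' y‖₊ : ℝ≥0∞)) =
          fun y => (‖a' y‖₊ : ℝ≥0∞) * S.indicator (fun _ => (1 : ℝ≥0∞)) y := by
        funext y
        by_cases hy : y ∈ S
        · rw [Set.indicator_of_mem hy, mul_one]
        · rw [Set.indicator_of_notMem hy, mul_zero]
          have : a' y = 0 := by simpa [hSdef] using hy
          simp [this]
      have h1 : (∫⁻ y, (‖a' y‖₊ : ℝ≥0∞) ^ qr ∂μ) ^ (1 / qr) = eLpNorm a q μ := by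
        rw [eLpNorm_congr_ae hae, eLpNorm_eq_lintegral_rpow_enorm_toReal (by positivity) hqtop]
        simp_rw [enorm_eq_nnnorm]
        rfl
      have h2 : (∫⁻ y, S.indicator (fun _ => (1 : ℝ≥0∞)) y ^ qr' ∂μ) ^ (1 / qr') ≤
          μ B ^ (1 / qr') := by
        have heq : (fun y => S.indicator (fun _ => (1 : ℝ≥0∞)) y ^ qr') =
            S.indicator (fun _ => (1 : ℝ≥0∞)) := by
          funext y
          by_cases hy : y ∈ S
          · simp [Set.indicator_of_mem hy]
          · simp [Set.indicator_of_notMem hy,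
              ENNReal.zero_rpow_of_pos hconj.symm.pos]
        rw [heq, lintegral_indicator hSmeas _, setLIntegral_const, one_mul]
        exact ENNReal.rpow_le_rpow hμS hconj.symm.one_div_nonneg
      calc ∫⁻ y, (‖a' y‖₊ : ℝ≥0∞) ∂μ
          = ∫⁻ y, (‖a' y‖₊ : ℝ≥0∞) * S.indicator (fun _ => (1 : ℝ≥0∞)) y ∂μ := by
            rw [← hfg]
        _ ≤ (∫⁻ y, (‖a' y‖₊ : ℝ≥0∞) ^ qr ∂μ) ^ (1 / qr) *
            (∫⁻ y, S.indicator (fun _ => (1 : ℝ≥0∞)) y ^ qr' ∂μ) ^ (1 / qr') := hH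
        _ ≤ μ B ^ (1 / qr - e) * μ B ^ (1 / qr') := by
            rw [h1]
            exact mul_le_mul' hnorm h2
        _ = μ B ^ (1 - e) := by
            rw [← ENNReal.rpow_add _ _ mB0 mBtop]
            congr 1
            have : 1 / qr' = 1 - 1 / qr := by
              rw [one_div, one_div, ← hconj.one_sub_inv]
            rw [this]; ring


/-- Let `a` be a local `(p,q)`-atom supported on `B(x₀,r₀)` with `r₀ > 1`, on a space
of homogeneous type of infinite measure. Then for any `x ∉ B(x₀, 2A₀r₀)` and any test
function `φ ∈ G(x,r,β,γ)` with norm at most `1` for some `r ∈ (0,1]`,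
`|∫ a φ dμ| ≤ C (r/d(x₀,x))^γ μ(B)^{1-1/p} / V(x₀,x)`,
with `C` independent of `a`, `x`, `φ` and `r`. -/
theorem stmt6 {X : Type*} [MeasurableSpace X] (d : X → X → ℝ) (μ : Measure X)
    (A0 : ℝ) (hA0 : 1 ≤ A0)
    (hd_eq : ∀ x y : X, d x y = 0 ↔ x = y)
    (hd_symm : ∀ x y : X, d x y = d y x)
    (hd_nonneg : ∀ x y : X, 0 ≤ d x y)
    (hd_tri : ∀ x y z : X, d x y ≤ A0 * (d x z + d z y))
    (hball : ∀ (x : X) (r : ℝ), 0 < r → 0 < μ (qball d x r) ∧ μ (qball d x r) < ⊤)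
    (hXinf : μ Set.univ = ⊤)
    (Cμ : ℝ) (hC : 1 ≤ Cμ)
    (hdouble : ∀ (x : X) (r : ℝ), 0 < r →
      μ (qball d x (2 * r)) ≤ ENNReal.ofReal Cμ * μ (qball d x r))
    (p : ℝ) (hp0 : 0 < p) (hp1 : p ≤ 1)
    (q : ℝ≥0∞) (hq : 1 ≤ q) (hpq : ENNReal.ofReal p < q)
    (β γ : ℝ) (hβ : 0 < β) (hγ : 0 < γ) :
    ∃ C : ℝ, 0 < C ∧ ∀ (x₀ : X) (r₀ : ℝ), 1 < r₀ →
      ∀ a : X → ℝ, MemLp a q μ →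
        Function.support a ⊆ qball d x₀ r₀ →
        eLpNorm a q μ ≤ μ (qball d x₀ r₀) ^ (1 / q.toReal - 1 / p) →
      ∀ x : X, x ∉ qball d x₀ (2 * A0 * r₀) →
      ∀ (φ : X → ℝ) (r : ℝ), 0 < r → r ≤ 1 →
        (∀ y : X, |φ y| ≤
          ((μ (qball d x r)).toReal + (μ (qball d x (d x y))).toReal)⁻¹
            * (r / (r + d x y)) ^ γ) →
        (∀ y z : X, d y z ≤ (2 * A0)⁻¹ * (r + d x y) →
          |φ y - φ z| ≤ (d y z / (r + d x y)) ^ β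
            * ((μ (qball d x r)).toReal + (μ (qball d x (d x y))).toReal)⁻¹
            * (r / (r + d x y)) ^ γ) →
        |∫ y, a y * φ y ∂μ| ≤
          C * (r / d x₀ x) ^ γ * (μ (qball d x₀ r₀)).toReal ^ (1 - 1 / p)
            / (μ (qball d x₀ (d x₀ x))).toReal := by
  have hA0pos : (0:ℝ) < A0 := lt_of_lt_of_le one_pos hA0
  have hCpos : (0:ℝ) < Cμ := lt_of_lt_of_le one_pos hC
  obtain ⟨n, hn⟩ : ∃ n : ℕ, 4 * A0 ^ 2 < (2:ℝ) ^ n :=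
    pow_unbounded_of_one_lt _ one_lt_two
  have hCn : (0:ℝ) < Cμ ^ n := pow_pos hCpos n
  -- doubling iterate
  have hiter : ∀ (z : X) (m : ℕ) (s : ℝ), 0 < s →
      μ (qball d z ((2:ℝ) ^ m * s)) ≤ (ENNReal.ofReal Cμ) ^ m * μ (qball d z s) := by
    intro z m
    induction m with
    | zero => intro s hs; simp
    | succ k ih =>
      intro s hs
      have h2 : (2:ℝ) ^ (k+1) * s = 2 * ((2:ℝ)^k * s) := by ring
      rw [h2]
      calc μ (qball d z (2 * ((2:ℝ)^k * s)))
          ≤ ENNReal.ofReal Cμ * μ (qball d z ((2:ℝ)^k * s)) :=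
            hdouble z _ (by positivity)
        _ ≤ ENNReal.ofReal Cμ * ((ENNReal.ofReal Cμ)^k * μ (qball d z s)) :=
            mul_le_mul_right (ih s hs) _
        _ = (ENNReal.ofReal Cμ)^(k+1) * μ (qball d z s) := by ring
  refine ⟨Cμ ^ n * (2 * A0) ^ γ, by positivity, ?_⟩
  intro x₀ r₀ hr₀ a ha hsupp hnorm x hx φ r hr hr1 hsize _
  have hr₀pos : (0:ℝ) < r₀ := lt_trans one_pos hr₀
  have hmB := hball x₀ r₀ hr₀pos
  simp only [qball, Set.mem_setOf_eq, not_lt] at hx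
  set d₀ := d x₀ x with hd₀def
  have hd₀pos : 0 < d₀ := lt_of_lt_of_le (by positivity) hx
  have hV := hball x₀ d₀ hd₀pos
  set V₀ := (μ (qball d x₀ d₀)).toReal with hV₀def
  have hV₀pos : 0 < V₀ := ENNReal.toReal_pos hV.1.ne' hV.2.ne
  -- key: for y in the support, d x y ≥ d₀ / (2 A0)
  have hkey : ∀ y : X, a y ≠ 0 → d₀ / (2 * A0) ≤ d x y := by
    intro y hy
    have hyB : d x₀ y < r₀ := hsupp hy
    have htri := hd_tri x₀ x y
    rw [hd_symm y x] at htri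
    rw [div_le_iff₀ (by positivity)]
    nlinarith [hd_nonneg x y]
  -- measure comparison
  have hmeas : μ (qball d x₀ d₀) ≤
      (ENNReal.ofReal Cμ) ^ n * μ (qball d x (d₀ / (2 * A0))) := by
    have hsub1 : qball d x₀ d₀ ⊆ qball d x (2 * A0 * d₀) := by
      intro z hz
      simp only [qball, Set.mem_setOf_eq] at hz ⊢
      have h1 : d x z ≤ A0 * (d x x₀ + d x₀ z) := hd_tri x z x₀
      have h2 : d x x₀ = d₀ := hd_symm x x₀
      nlinarith
    have hsub2 : qball d x (2 * A0 * d₀) ⊆ qball d x ((2:ℝ)^n * (d₀ / (2 * A0))) := by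
      intro z hz
      simp only [qball, Set.mem_setOf_eq] at hz ⊢
      refine lt_of_lt_of_le hz ?_
      rw [show (2:ℝ)^n * (d₀ / (2 * A0)) = ((2:ℝ)^n / (2 * A0)) * d₀ by ring]
      refine mul_le_mul_of_nonneg_right ?_ hd₀pos.le
      rw [le_div_iff₀ (by positivity)]
      nlinarith
    calc μ (qball d x₀ d₀) ≤ μ (qball d x ((2:ℝ)^n * (d₀ / (2 * A0)))) :=
          measure_mono (hsub1.trans hsub2)
      _ ≤ (ENNReal.ofReal Cμ) ^ n * μ (qball d x (d₀ / (2 * A0))) :=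
          hiter x n _ (by positivity)
  -- pointwise bound on φ over the support of a
  set M : ℝ := Cμ ^ n * V₀⁻¹ * ((2 * A0) ^ γ * (r / d₀) ^ γ) with hMdef
  have hMnonneg : 0 ≤ M := by
    have h1 : (0:ℝ) ≤ (2 * A0) ^ γ := Real.rpow_nonneg (by positivity) _
    have h2 : (0:ℝ) ≤ (r / d₀) ^ γ := Real.rpow_nonneg (by positivity) _
    positivity
  have hM : ∀ y : X, a y ≠ 0 → |φ y| ≤ M := by
    intro y hy
    have hdy : d₀ / (2 * A0) ≤ d x y := hkey y hy
    have hdypos : 0 < d x y := lt_of_lt_of_le (by positivity) hdy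
    have hVy := hball x (d x y) hdypos
    set Vy := (μ (qball d x (d x y))).toReal with hVydef
    have hVypos : 0 < Vy := ENNReal.toReal_pos hVy.1.ne' hVy.2.ne
    -- V₀ ≤ Cμ^n * Vy
    have hcomp : V₀ ≤ Cμ ^ n * Vy := by
      have hle : μ (qball d x₀ d₀) ≤ (ENNReal.ofReal Cμ) ^ n * μ (qball d x (d x y)) :=
        hmeas.trans (mul_le_mul_right (measure_mono fun z hz =>
          lt_of_lt_of_le hz hdy) _)
      have hne : (ENNReal.ofReal Cμ) ^ n * μ (qball d x (d x y)) ≠ ⊤ :=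
        ENNReal.mul_ne_top (by simp) hVy.2.ne
      have := ENNReal.toReal_mono hne hle
      rwa [ENNReal.toReal_mul, ENNReal.toReal_pow, ENNReal.toReal_ofReal hCpos.le] at this
    have hinv : Vy⁻¹ ≤ Cμ ^ n / V₀ := by
      rw [inv_eq_one_div, div_le_div_iff₀ hVypos hV₀pos]
      nlinarith
    have hsum : ((μ (qball d x r)).toReal + Vy)⁻¹ ≤ Vy⁻¹ := by
      apply inv_anti₀ hVypos
      exact le_add_of_nonneg_left ENNReal.toReal_nonneg
    have hratio : (r / (r + d x y)) ^ γ ≤ (2 * A0) ^ γ * (r / d₀) ^ γ := by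
      rw [← Real.mul_rpow (by positivity) (by positivity)]
      apply Real.rpow_le_rpow (by positivity) _ hγ.le
      have h1 : r / (r + d x y) ≤ r / (d₀ / (2 * A0)) := by
        apply div_le_div_of_nonneg_left hr.le (by positivity)
        linarith
      refine h1.trans_eq ?_
      field_simp
    calc |φ y| ≤ ((μ (qball d x r)).toReal + Vy)⁻¹ * (r / (r + d x y)) ^ γ := hsize y
      _ ≤ Vy⁻¹ * ((2 * A0) ^ γ * (r / d₀) ^ γ) := by
          apply mul_le_mul hsum hratio (Real.rpow_nonneg (by positivity) _)
            (by positivity)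
      _ ≤ (Cμ ^ n / V₀) * ((2 * A0) ^ γ * (r / d₀) ^ γ) := by
          apply mul_le_mul_of_nonneg_right hinv
          have h1 : (0:ℝ) ≤ (2 * A0) ^ γ := Real.rpow_nonneg (by positivity) _
          have h2 : (0:ℝ) ≤ (r / d₀) ^ γ := Real.rpow_nonneg (by positivity) _
          positivity
      _ = M := by rw [hMdef]; ring
  -- L1 bound on a
  have hL : ∫⁻ y, (‖a y‖₊ : ℝ≥0∞) ∂μ ≤ μ (qball d x₀ r₀) ^ (1 - 1/p) :=
    L1bound μ a q hq ha _ hsupp hmB.1.ne' hmB.2.ne (1/p) hnorm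
  have hLtop : ∫⁻ y, (‖a y‖₊ : ℝ≥0∞) ∂μ < ⊤ := by
    refine lt_of_le_of_lt hL ?_
    simp [ENNReal.rpow_eq_top_iff, hmB.1.ne', hmB.2.ne, lt_top_iff_ne_top]
  have hInta : Integrable a μ := ⟨ha.1, hLtop⟩
  -- RHS is nonneg
  have hRHS : 0 ≤ Cμ ^ n * (2 * A0) ^ γ * (r / d₀) ^ γ *
      (μ (qball d x₀ r₀)).toReal ^ (1 - 1 / p) / V₀ := by
    have h1 : (0:ℝ) ≤ (2 * A0) ^ γ := Real.rpow_nonneg (by positivity) _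
    have h2 : (0:ℝ) ≤ (r / d₀) ^ γ := Real.rpow_nonneg (by positivity) _
    have h3 : (0:ℝ) ≤ (μ (qball d x₀ r₀)).toReal ^ (1 - 1 / p) :=
      Real.rpow_nonneg ENNReal.toReal_nonneg _
    positivity
  by_cases hint : Integrable (fun y => a y * φ y) μ
  · -- pointwise: |a y * φ y| ≤ M * |a y|
    have h0 : ∀ y, |a y * φ y| ≤ M * |a y| := by
      intro y
      by_cases hy : a y = 0
      · simp [hy]
      · rw [abs_mul, mul_comm]
        exact mul_le_mul_of_nonneg_right (hM y hy) (abs_nonneg _)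
    have hIabs : ∫ y, |a y| ∂μ ≤ (μ (qball d x₀ r₀)).toReal ^ (1 - 1/p) := by
      have he : ∫ y, |a y| ∂μ = (∫⁻ y, (‖a y‖₊ : ℝ≥0∞) ∂μ).toReal := by
        simp_rw [← enorm_eq_nnnorm]
        rw [← integral_norm_eq_lintegral_enorm ha.1]
        simp_rw [Real.norm_eq_abs]
      rw [he, ENNReal.toReal_rpow]
      exact ENNReal.toReal_mono (by
        simp [ENNReal.rpow_eq_top_iff, hmB.1.ne', hmB.2.ne]) hL
    calc |∫ y, a y * φ y ∂μ| ≤ ∫ y, |a y * φ y| ∂μ := by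
          simpa only [Real.norm_eq_abs] using
            norm_integral_le_integral_norm (μ := μ) (fun y => a y * φ y)
      _ ≤ ∫ y, M * |a y| ∂μ := integral_mono hint.abs (hInta.abs.const_mul M) h0
      _ = M * ∫ y, |a y| ∂μ := integral_const_mul M _
      _ ≤ M * (μ (qball d x₀ r₀)).toReal ^ (1 - 1/p) :=
          mul_le_mul_of_nonneg_left hIabs hMnonneg
      _ = Cμ ^ n * (2 * A0) ^ γ * (r / d₀) ^ γ *
          (μ (qball d x₀ r₀)).toReal ^ (1 - 1 / p) / V₀ := by
          rw [hMdef, div_eq_mul_inv]; ring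
  · rw [integral_undef hint, abs_zero]
    exact hRHS
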